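/- Let V be a finite set, let σ and τ be fixed-point-free involutions of V (σ(v) ≠ v and τ(v) ≠ v for all v), and let c : V → {red, blue} be a coloring satisfying c(σ(v)) ≠ c(v) and c(τ(v)) = c(v) for all v ∈ V. Then the cardinality of every orbit of the action on V of the subgroup of permutations generated by σ and τ is divisible by 4. -/

import Mathlib

/-- If `σ` and `τ` are fixed-point-free involutions of a finite set `V`
and `c : V → Bool` is a coloring with `c (σ v) ≠ c v` and `c (τ v) = c v` for all `v`,
then every orbit of the subgroup generated by `σ` and `τ` has cardinality divisible
by `4`. -/
theorem orbit_card_div_four {V : Type*} [Fintype V]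
    (σ τ : Equiv.Perm V)
    (hσinv : ∀ v, σ (σ v) = v) (hσfpf : ∀ v, σ v ≠ v)
    (hτinv : ∀ v, τ (τ v) = v) (hτfpf : ∀ v, τ v ≠ v)
    (c : V → Bool)
    (hcσ : ∀ v, c (σ v) ≠ c v) (hcτ : ∀ v, c (τ v) = c v) :
    ∀ v : V,
      4 ∣ Nat.card
        (MulAction.orbit (↥(Subgroup.closure ({σ, τ} : Set (Equiv.Perm V)))) v) := by
  intro v
  classical
  set π : Equiv.Perm V := σ * τ with hπ
  -- basic relations
  have hπapp : ∀ x, π x = σ (τ x) := fun x => rfl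
  have hcπ : ∀ x, c (π x) = !(c x) := by
    intro x
    have h1 := hcσ (τ x)
    have h2 := hcτ x
    rw [hπapp, h2] at *
    cases h : c x <;> cases h' : c (σ (τ x)) <;> simp_all
  -- key relation: π (σ (π x)) = σ x
  have hkey : ∀ x, π (σ (π x)) = σ x := by
    intro x
    rw [hπapp, hπapp, hσinv, hτinv]
  have hkeyn : ∀ (m : ℕ) (x : V), (π ^ m) (σ ((π ^ m) x)) = σ x := by
    intro m
    induction m with
    | zero => intro x; simp
    | succ m ih =>
      intro x
      have e1 : (π ^ (m + 1)) x = (π ^ m) (π x) := by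
        rw [pow_succ]; rfl
      have e2 : ∀ y, (π ^ (m + 1)) y = π ((π ^ m) y) := by
        intro y; rw [pow_succ']; rfl
      rw [e1, e2, ih (π x), hkey]
  -- parity of colors along π-powers
  have hcpow : ∀ (j : ℕ) (x : V), c ((π ^ j) x) = if Even j then c x else !(c x) := by
    intro j
    induction j with
    | zero => intro x; simp
    | succ j ih =>
      intro x
      have e2 : (π ^ (j + 1)) x = π ((π ^ j) x) := by rw [pow_succ']; rfl
      rw [e2, hcπ, ih]
      rcases Nat.even_or_odd j with h | h
      · simp [h, Nat.even_add_one, Nat.not_even_iff_odd, h.add_one]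
      · simp [Nat.not_even_iff_odd.2 h, Nat.even_add_one, Nat.not_even_iff_odd, h.add_one]
  -- σ v is not a π-power of v
  have hσv : ∀ k : ℕ, σ v ≠ (π ^ k) v := by
    intro k hk
    -- k is odd
    have hodd : ¬ Even k := by
      intro he
      have := hcpow k v
      rw [← hk] at this
      simp [he] at this
      exact hcσ v this
    obtain ⟨j, hj⟩ := Nat.not_even_iff_odd.1 hodd
    -- τ fixes π^j v, contradiction
    have h1 : (π ^ (j + 1)) (σ ((π ^ (j + 1)) v)) = (π ^ (j + 1)) ((π ^ j) v) := by
      rw [hkeyn, hk, hj]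
      have : (π ^ (2 * j + 1)) v = (π ^ (j + 1)) ((π ^ j) v) := by
        rw [← Equiv.Perm.mul_apply, ← pow_add]
        ring_nf
      rw [this]
    have h2 : σ ((π ^ (j + 1)) v) = (π ^ j) v := (Equiv.injective _) h1
    have h3 : τ ((π ^ j) v) = σ ((π ^ (j + 1)) v) := by
      have : (π ^ (j + 1)) v = π ((π ^ j) v) := by rw [pow_succ']; rfl
      rw [this, hπapp, hσinv]
    rw [h2] at h3
    exact hτfpf _ h3
  -- the minimal period
  set n : ℕ := Function.minimalPeriod (⇑π) v with hn
  have hper : (π ^ n) v = v := by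
    have := Function.isPeriodicPt_minimalPeriod (⇑π) v
    rwa [Function.IsPeriodicPt, Function.IsFixedPt, Equiv.Perm.iterate_eq_pow] at this
  have hnpos : 0 < n := by
    apply Function.IsPeriodicPt.minimalPeriod_pos (orderOf_pos π)
    rw [Function.IsPeriodicPt, Function.IsFixedPt, Equiv.Perm.iterate_eq_pow, pow_orderOf_eq_one]
    rfl
  have hneven : Even n := by
    by_contra hodd
    have := hcpow n v
    rw [hper] at this
    simp [hodd] at this
  -- the set A of π-powers of v
  set A : Set V := ↑((Finset.range n).image (fun j => (π ^ j) v)) with hA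
  have hApow : ∀ j : ℕ, (π ^ j) v ∈ A := by
    intro j
    have hmod : (π ^ (j % n)) v = (π ^ j) v := by
      have := Function.iterate_mod_minimalPeriod_eq (f := ⇑π) (x := v) (n := j)
      rwa [Equiv.Perm.iterate_eq_pow, Equiv.Perm.iterate_eq_pow] at this
    rw [hA]
    simp only [Finset.coe_image, Set.mem_image, Finset.mem_coe, Finset.mem_range]
    exact ⟨j % n, Nat.mod_lt _ hnpos, hmod⟩
  have hAmem : ∀ x ∈ A, ∃ j : ℕ, (π ^ j) v = x := by
    intro x hx
    rw [hA] at hx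
    simp only [Finset.coe_image, Set.mem_image, Finset.mem_coe, Finset.mem_range] at hx
    obtain ⟨j, _, hj⟩ := hx
    exact ⟨j, hj⟩
  have hvA : v ∈ A := by
    have := hApow 0
    simpa using this
  have hcardA : A.ncard = n := by
    rw [hA, Set.ncard_coe_finset, Finset.card_image_of_injOn, Finset.card_range]
    intro a ha b hb hab
    simp only [Finset.coe_range, Set.mem_Iio] at ha hb
    exact Function.iterate_injOn_Iio_minimalPeriod (f := ⇑π) (x := v) ha hb hab
  -- π⁻¹ maps A to A
  have hπinvA : ∀ x ∈ A, π⁻¹ x ∈ A := by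
    intro x hx
    obtain ⟨j, rfl⟩ := hAmem x hx
    have : π⁻¹ ((π ^ j) v) = (π ^ (j + (n - 1))) v := by
      apply (Equiv.injective π)
      rw [← Equiv.Perm.mul_apply, mul_inv_cancel, Equiv.Perm.one_apply]
      have : π ((π ^ (j + (n - 1))) v) = (π ^ (j + (n - 1) + 1)) v := by
        rw [pow_succ']; rfl
      rw [this]
      have he : j + (n - 1) + 1 = j + n := by omega
      rw [he, pow_add, Equiv.Perm.mul_apply, hper]
    rw [this]
    exact hApow _
  -- the candidate orbit set
  set S : Set V := A ∪ σ '' A with hS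
  have hdisj : Disjoint A (σ '' A) := by
    rw [Set.disjoint_left]
    rintro x hxA ⟨y, hyA, rfl⟩
    obtain ⟨i, rfl⟩ := hAmem y hyA
    obtain ⟨j, hj⟩ := hAmem _ hxA
    have : σ v = (π ^ i) ((π ^ j) v) := by
      rw [hj, hkeyn]
    rw [← Equiv.Perm.mul_apply, ← pow_add] at this
    exact hσv _ this
  -- σ and τ map S to S
  have hσS : ∀ x ∈ S, σ x ∈ S := by
    rintro x (hx | ⟨y, hy, rfl⟩)
    · exact Or.inr ⟨x, hx, rfl⟩
    · rw [hσinv]; exact Or.inl hy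
  have hτS : ∀ x ∈ S, τ x ∈ S := by
    rintro x (hx | ⟨y, hy, rfl⟩)
    · -- τ x = σ (π x)
      obtain ⟨j, rfl⟩ := hAmem x hx
      have : τ ((π ^ j) v) = σ (π ((π ^ j) v)) := by rw [hπapp, hσinv]
      rw [this]
      have e : π ((π ^ j) v) = (π ^ (j + 1)) v := by rw [pow_succ']; rfl
      rw [e]
      exact Or.inr ⟨_, hApow (j + 1), rfl⟩
    · -- τ (σ y) = π⁻¹ y
      have : τ (σ y) = π⁻¹ y := by
        apply (Equiv.injective π)
        rw [show π (π⁻¹ y) = y from π.apply_symm_apply y, hπapp, hτinv, hσinv]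
      rw [this]
      exact Or.inl (hπinvA y hy)
  have hSfin : S.Finite := Set.toFinite S
  -- every element of the closure maps S onto S
  have hclS : ∀ g ∈ Subgroup.closure ({σ, τ} : Set (Equiv.Perm V)), (⇑g) '' S = S := by
    intro g hg
    induction hg using Subgroup.closure_induction with
    | mem x hx =>
      rcases hx with rfl | rfl
      · apply Set.eq_of_subset_of_ncard_le
        · rintro y ⟨z, hz, rfl⟩; exact hσS z hz
        · rw [Set.ncard_image_of_injective _ (Equiv.injective _)]
        · exact hSfin
      · apply Set.eq_of_subset_of_ncard_le
        · rintro y ⟨z, hz, rfl⟩; exact hτS z hz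
        · rw [Set.ncard_image_of_injective _ (Equiv.injective _)]
        · exact hSfin
    | one => simp
    | mul a b _ _ ha hb =>
      have : ⇑(a * b) = ⇑a ∘ ⇑b := rfl
      rw [this, Set.image_comp, hb, ha]
    | inv a _ ha =>
      have : ⇑a⁻¹ '' (⇑a '' S) = S := by
        rw [← Set.image_comp]
        have : ⇑a⁻¹ ∘ ⇑a = id := by
          funext x; simp
        rw [this, Set.image_id]
      rw [ha] at this
      exact this
  -- membership of generators in the closure
  have hσmem : σ ∈ Subgroup.closure ({σ, τ} : Set (Equiv.Perm V)) :=
    Subgroup.subset_closure (Or.inl rfl)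
  have hτmem : τ ∈ Subgroup.closure ({σ, τ} : Set (Equiv.Perm V)) :=
    Subgroup.subset_closure (Or.inr rfl)
  have hπmem : π ∈ Subgroup.closure ({σ, τ} : Set (Equiv.Perm V)) :=
    mul_mem hσmem hτmem
  -- the orbit equals S
  have horb : MulAction.orbit (↥(Subgroup.closure ({σ, τ} : Set (Equiv.Perm V)))) v = S := by
    apply Set.Subset.antisymm
    · rintro x ⟨⟨g, hg⟩, rfl⟩
      show g v ∈ S
      rw [← hclS g hg]
      exact ⟨v, Or.inl hvA, rfl⟩
    · rintro x (hx | ⟨y, hy, rfl⟩)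
      · obtain ⟨j, rfl⟩ := hAmem x hx
        exact ⟨⟨π ^ j, pow_mem hπmem j⟩, rfl⟩
      · obtain ⟨j, rfl⟩ := hAmem y hy
        refine ⟨⟨σ * π ^ j, mul_mem hσmem (pow_mem hπmem j)⟩, rfl⟩
  -- compute the cardinality
  have hcard : Nat.card (MulAction.orbit (↥(Subgroup.closure ({σ, τ} : Set (Equiv.Perm V)))) v)
      = 2 * n := by
    rw [Nat.card_coe_set_eq, horb, hS,
      Set.ncard_union_eq hdisj (Set.toFinite _) (Set.toFinite _),
      Set.ncard_image_of_injective _ (Equiv.injective _), hcardA]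
    omega
  rw [hcard]
  obtain ⟨m, hm⟩ := hneven
  omega
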